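/- Suppose (λ*, y*) is an eigenpair with ‖y*‖₂ = 1 and set F(y*) := (I − y*y*ᵀ)(λ*I − J(y*)). Then: (i) the characteristic polynomial of F(y*) equals the characteristic polynomial of λ*I − J(y*); equivalently the complex eigenvalues of F(y*), counted with algebraic multiplicity, are exactly λ* − μ where μ ranges over the complex eigenvalues of J(y*); (ii) if λ* is an eigenvalue of J(y*) of algebraic multiplicity one and λ* < Re μ for every complex eigenvalue μ ≠ λ* of J(y*), then every nonzero complex eigenvalue of F(y*) has negative real part; (iii) if some complex eigenvalue μ of J(y*) satisfies Re μ < λ*, then F(y*) has a complex eigenvalue with positive real part. -/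

import Mathlib

open Matrix Asymptotics Topology
open scoped RealInnerProductSpace

noncomputable def mvCLM {ι : Type*} [Fintype ι] [DecidableEq ι] (M : Matrix ι ι ℝ) :
    EuclideanSpace ℝ ι →L[ℝ] EuclideanSpace ℝ ι :=
  LinearMap.toContinuousLinearMap (Matrix.toEuclideanLin M)

noncomputable def invitPsi {n : ℕ} (J : EuclideanSpace ℝ (Fin n) → Matrix (Fin n) (Fin n) ℝ)
    (σ : ℝ) (v : EuclideanSpace ℝ (Fin n)) : EuclideanSpace ℝ (Fin n) :=
  mvCLM ((J v - σ • 1)⁻¹) v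

noncomputable def invitPhi {n : ℕ} (J : EuclideanSpace ℝ (Fin n) → Matrix (Fin n) (Fin n) ℝ)
    (σ : ℝ) (v : EuclideanSpace ℝ (Fin n)) : EuclideanSpace ℝ (Fin n) :=
  ‖invitPsi J σ v‖⁻¹ • invitPsi J σ v

noncomputable def rayQuot {n : ℕ} (A : EuclideanSpace ℝ (Fin n) → Matrix (Fin n) (Fin n) ℝ)
    (v : EuclideanSpace ℝ (Fin n)) : ℝ :=
  ⟪v, mvCLM (A v) v⟫ / ⟪v, v⟫

section Aux

variable {m : Type*} [Fintype m] [DecidableEq m]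

lemma evalCharpoly {R : Type*} [CommRing R] (M : Matrix m m R) (x : R) :
    M.charpoly.eval x = (x • (1 : Matrix m m R) - M).det := by
  rw [Matrix.charpoly, ← Polynomial.coe_evalRingHom, RingHom.map_det]
  congr 1
  ext i j
  by_cases h : i = j
  · subst h
    simp [Matrix.charmatrix_apply_eq, Matrix.one_apply]
  · simp [Matrix.charmatrix_apply_ne _ _ _ h, Matrix.one_apply, h]

lemma memSpectrumIffRoot {K : Type*} [Field K] (M : Matrix m m K) (μ : K) :
    μ ∈ spectrum K M ↔ M.charpoly.IsRoot μ := by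
  rw [spectrum.mem_iff, Algebra.algebraMap_eq_smul_one, Matrix.isUnit_iff_isUnit_det,
    isUnit_iff_ne_zero, not_ne_iff, Polynomial.IsRoot, evalCharpoly]

lemma detKey {R : Type*} [Field R] (M : Matrix m m R) (y : m → R)
    (hMy : M *ᵥ y = 0) (x : R) (hx : x ≠ 0)
    (hdet : (x • (1 : Matrix m m R) - M).det ≠ 0) :
    (x • (1 : Matrix m m R) - (1 - vecMulVec y y) * M).det
      = (x • (1 : Matrix m m R) - M).det := by
  set B := x • (1 : Matrix m m R) - M with hB
  have hBy : B *ᵥ y = x • y := by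
    rw [hB, sub_mulVec, smul_mulVec, one_mulVec, hMy, sub_zero]
  have hU : IsUnit B.det := isUnit_iff_ne_zero.mpr hdet
  have hBinv : B⁻¹ *ᵥ y = x⁻¹ • y := by
    have h1 : B⁻¹ *ᵥ (B *ᵥ y) = y := by
      rw [mulVec_mulVec, Matrix.nonsing_inv_mul B hU, one_mulVec]
    rw [hBy, mulVec_smul] at h1
    calc B⁻¹ *ᵥ y = x⁻¹ • (x • (B⁻¹ *ᵥ y)) := by
          rw [smul_smul, inv_mul_cancel₀ hx, one_smul]
      _ = x⁻¹ • y := by rw [h1]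
  have hwy : (y ᵥ* M) ⬝ᵥ y = 0 := by
    rw [← Matrix.dotProduct_mulVec, hMy, dotProduct_zero]
  have hsplit : x • (1 : Matrix m m R) - (1 - vecMulVec y y) * M
      = B + replicateCol (Fin 1) y * replicateRow (Fin 1) (y ᵥ* M) := by
    rw [vecMulVec_eq (Fin 1), Matrix.sub_mul, Matrix.one_mul, Matrix.mul_assoc,
      ← Matrix.replicateRow_vecMul, hB]
    abel
  rw [hsplit, Matrix.det_add_mul (replicateCol (Fin 1) y) (replicateRow (Fin 1) (y ᵥ* M)) hU, Matrix.mul_assoc, ← Matrix.replicateCol_mulVec, hBinv]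
  have hz : replicateRow (Fin 1) (y ᵥ* M) * replicateCol (Fin 1) (x⁻¹ • y) = 0 := by
    ext i j
    rw [Matrix.replicateRow_mul_replicateCol_apply, dotProduct_smul, hwy, smul_zero, Matrix.zero_apply]
  rw [hz, add_zero]
  simp

lemma charpolyKey (M : Matrix m m ℝ) (y : m → ℝ) (hMy : M *ᵥ y = 0) :
    ((1 - vecMulVec y y) * M).charpoly = M.charpoly := by
  apply Polynomial.eq_of_infinite_eval_eq
  have hfin : Set.Finite ({(0 : ℝ)} ∪ {x : ℝ | M.charpoly.IsRoot x}) :=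
    (Set.finite_singleton 0).union
      (Polynomial.finite_setOf_isRoot M.charpoly_monic.ne_zero)
  refine Set.Infinite.mono ?_ hfin.infinite_compl
  intro x hx
  simp only [Set.mem_compl_iff, Set.mem_union, Set.mem_singleton_iff, Set.mem_setOf_eq,
    not_or] at hx
  obtain ⟨hx0, hxroot⟩ := hx
  have hdet : (x • (1 : Matrix m m ℝ) - M).det ≠ 0 := by
    rw [← evalCharpoly]; exact hxroot
  show Polynomial.eval x ((1 - vecMulVec y y) * M).charpoly = Polynomial.eval x M.charpoly
  rw [evalCharpoly, evalCharpoly, detKey M y hMy x hx0 hdet]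

end Aux

/-- Properties of the linearization `F(y*) = (I − y*y*ᵀ)(λ*I − J(y*))`:
(i) its characteristic polynomial equals that of `λ*I − J(y*)` (so its complex eigenvalues,
with multiplicity, are the `λ* − μ` with `μ` an eigenvalue of `J(y*)`);
(ii) if `λ*` is algebraically simple for `J(y*)` and `λ* < Re μ` for all eigenvalues
`μ ≠ λ*`, then every nonzero complex eigenvalue of `F(y*)` has negative real part;
(iii) if some eigenvalue `μ` of `J(y*)` satisfies `Re μ < λ*`, then `F(y*)` has a complex
eigenvalue with positive real part. -/
theorem stmt15 {n : ℕ} (hn : 1 ≤ n)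
    (A J : EuclideanSpace ℝ (Fin n) → Matrix (Fin n) (Fin n) ℝ)
    (hsymm : ∀ v : EuclideanSpace ℝ (Fin n), v ≠ 0 → (A v).IsSymm)
    (hsmooth : ContDiffOn ℝ 1 (fun w i j => A w i j) {(0 : EuclideanSpace ℝ (Fin n))}ᶜ)
    (hscale : ∀ α : ℝ, α ≠ 0 → ∀ v : EuclideanSpace ℝ (Fin n), v ≠ 0 → A (α • v) = A v)
    (hJ : ∀ v : EuclideanSpace ℝ (Fin n), v ≠ 0 →
      HasFDerivAt (fun w => mvCLM (A w) w) (mvCLM (J v)) v)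
    (lam : ℝ) (ystar : EuclideanSpace ℝ (Fin n)) (hnorm : ‖ystar‖ = 1)
    (heig : mvCLM (A ystar) ystar = lam • ystar)
    (F : Matrix (Fin n) (Fin n) ℝ)
    (hF : F = (1 - Matrix.vecMulVec ystar ystar) *
      (lam • (1 : Matrix (Fin n) (Fin n) ℝ) - J ystar)) :
    (F.charpoly = (lam • (1 : Matrix (Fin n) (Fin n) ℝ) - J ystar).charpoly) ∧
    (((J ystar).map (Complex.ofReal)).charpoly.rootMultiplicity (lam : ℂ) = 1 →
      (∀ μ ∈ spectrum ℂ ((J ystar).map (Complex.ofReal)), μ ≠ (lam : ℂ) → lam < μ.re) →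
      ∀ ζ ∈ spectrum ℂ (F.map (Complex.ofReal)), ζ ≠ 0 → ζ.re < 0) ∧
    ((∃ μ ∈ spectrum ℂ ((J ystar).map (Complex.ofReal)), μ.re < lam) →
      ∃ ζ ∈ spectrum ℂ (F.map (Complex.ofReal)), 0 < ζ.re) := by
  -- y* is nonzero
  have hy0 : ystar ≠ 0 := by
    intro h; rw [h, norm_zero] at hnorm; exact zero_ne_one hnorm
  -- Euler-type identity: J(y*) y* = A(y*) y* = λ y*
  have hkey : mvCLM (J ystar) ystar = lam • ystar := by
    have hg : HasDerivAt (fun t : ℝ => t • ystar) ystar 1 := by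
      simpa using (hasDerivAt_id (1 : ℝ)).smul_const ystar
    have hf : HasFDerivAt (fun w => mvCLM (A w) w) (mvCLM (J ystar)) ((1 : ℝ) • ystar) := by
      rw [one_smul]; exact hJ ystar hy0
    have hDf : HasDerivAt (fun t : ℝ => mvCLM (A (t • ystar)) (t • ystar))
        (mvCLM (J ystar) ystar) 1 := hf.comp_hasDerivAt (l := fun w => mvCLM (A w) w) 1 hg
    have hev : (fun t : ℝ => mvCLM (A (t • ystar)) (t • ystar)) =ᶠ[𝓝 (1 : ℝ)]
        fun t : ℝ => t • (lam • ystar) := by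
      filter_upwards [isOpen_ne.mem_nhds (by norm_num : (1 : ℝ) ≠ 0)] with t ht
      rw [hscale t ht ystar hy0, ContinuousLinearMap.map_smul, heig]
    have hD2 : HasDerivAt (fun t : ℝ => t • (lam • ystar)) (lam • ystar) 1 := by
      simpa using (hasDerivAt_id (1 : ℝ)).smul_const (lam • ystar)
    have hD2' : HasDerivAt (fun t : ℝ => mvCLM (A (t • ystar)) (t • ystar))
        (lam • ystar) 1 := hD2.congr_of_eventuallyEq hev
    exact hDf.unique hD2'
  -- translate to mulVec
  have hJy : (J ystar) *ᵥ (ystar : Fin n → ℝ) = lam • (ystar : Fin n → ℝ) := congrArg WithLp.ofLp hkey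
  have hMy : (lam • (1 : Matrix (Fin n) (Fin n) ℝ) - J ystar) *ᵥ (ystar : Fin n → ℝ) = 0 := by
    rw [sub_mulVec, smul_mulVec, one_mulVec, hJy, sub_self]
  -- Part (i)
  have hpart1 : F.charpoly = (lam • (1 : Matrix (Fin n) (Fin n) ℝ) - J ystar).charpoly := by
    rw [hF]; exact charpolyKey _ _ hMy
  -- complex matrices
  have hmapM : ((lam • (1 : Matrix (Fin n) (Fin n) ℝ) - J ystar).map Complex.ofReal)
      = (lam : ℂ) • 1 - (J ystar).map Complex.ofReal := by
    ext i j
    by_cases h : i = j <;>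
      simp [Matrix.map_apply, Matrix.sub_apply, Matrix.smul_apply, Matrix.one_apply, h]
  have hFc : (F.map Complex.ofReal).charpoly
      = ((lam • (1 : Matrix (Fin n) (Fin n) ℝ) - J ystar).map Complex.ofReal).charpoly := by
    have hcm : ∀ M : Matrix (Fin n) (Fin n) ℝ,
        (M.map Complex.ofReal).charpoly = M.charpoly.map Complex.ofRealHom :=
      fun M => Matrix.charpoly_map M Complex.ofRealHom
    rw [hcm, hcm, hpart1]
  have hroot : ∀ ζ : ℂ,
      (((lam • (1 : Matrix (Fin n) (Fin n) ℝ) - J ystar)).map Complex.ofReal).charpoly.IsRoot ζ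
      ↔ ((J ystar).map Complex.ofReal).charpoly.IsRoot ((lam : ℂ) - ζ) := by
    intro ζ
    rw [Polynomial.IsRoot, Polynomial.IsRoot, evalCharpoly, evalCharpoly, hmapM]
    have hneg : ζ • (1 : Matrix (Fin n) (Fin n) ℂ)
          - ((lam : ℂ) • 1 - (J ystar).map Complex.ofReal)
        = -(((lam : ℂ) - ζ) • (1 : Matrix (Fin n) (Fin n) ℂ)
          - (J ystar).map Complex.ofReal) := by
      module
    rw [hneg, Matrix.det_neg]
    constructor
    · intro h
      rcases mul_eq_zero.mp h with h' | h'
      · exact absurd h' (pow_ne_zero _ (by norm_num))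
      · exact h'
    · intro h; rw [h, mul_zero]
  refine ⟨hpart1, ?_, ?_⟩
  · intro _ hre ζ hζ hζ0
    have h1 : (F.map Complex.ofReal).charpoly.IsRoot ζ := (memSpectrumIffRoot _ _).mp hζ
    rw [hFc] at h1
    have h3 : (lam : ℂ) - ζ ∈ spectrum ℂ ((J ystar).map Complex.ofReal) :=
      (memSpectrumIffRoot _ _).mpr ((hroot ζ).mp h1)
    by_cases hc : (lam : ℂ) - ζ = (lam : ℂ)
    · exact absurd (sub_eq_self.mp hc) hζ0
    · have hlt := hre _ h3 hc
      simp only [Complex.sub_re, Complex.ofReal_re] at hlt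
      linarith
  · rintro ⟨μ, hμ, hμre⟩
    refine ⟨(lam : ℂ) - μ, ?_, ?_⟩
    · apply (memSpectrumIffRoot _ _).mpr
      rw [hFc]
      apply (hroot _).mpr
      have := (memSpectrumIffRoot _ _).mp hμ
      simpa using this
    · simp only [Complex.sub_re, Complex.ofReal_re]
      linarith
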